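/- Let (ν_t)_{t≥0} be any play distribution consistent with the memory-one strategy (σ_X^0[·], σ_X) of player X and the initial action σ_Y^0 of player Y in the strictly-alternating game in which Y moves first. Then for every bounded measurable function ψ : S_X → ℝ, the series ∑_{t=0}^∞ λ^{2t+1} ∫_{S_X×S_Y} [ψ(x) − λ² ∫_{S_X} ψ(s) dσ_X[x,y](s)] dν_t(x,y) converges and equals λ ∫_{S_Y} ∫_{S_X} ψ(s) dσ_X^0[y_0](s) dσ_Y^0(y_0). -/

import Mathlib

open MeasureTheory

open ProbabilityTheory in
/-- Helper: integrating `ψ ∘ fst` against a measure whose first marginal is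
`μ.bind κ` equals the iterated integral. -/
lemma marg_integral {A SX SY : Type*} [MeasurableSpace A] [MeasurableSpace SX]
    [MeasurableSpace SY]
    (μ : Measure A) [IsProbabilityMeasure μ] (κ : Kernel A SX) [IsMarkovKernel κ]
    (μ' : Measure (SX × SY)) [IsProbabilityMeasure μ']
    (h : ∀ E : Set SX, MeasurableSet E →
      μ' (E ×ˢ (Set.univ : Set SY)) = ∫⁻ a, κ a E ∂μ)
    (ψ : SX → ℝ) (hψm : Measurable ψ) (C : ℝ) (hψb : ∀ s, |ψ s| ≤ C) :
    ∫ q, ψ q.1 ∂μ' = ∫ a, ∫ s, ψ s ∂(κ a) ∂μ := by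
  have hfst : μ'.fst = (μ ⊗ₘ κ).snd := by
    ext E hE
    rw [Measure.fst_apply hE, Measure.snd_apply hE]
    have h1 : Prod.fst ⁻¹' E = E ×ˢ (Set.univ : Set SY) := by
      ext q; simp
    have h2 : Prod.snd ⁻¹' E = (Set.univ : Set A) ×ˢ E := by
      ext q; simp
    rw [h1, h2, h E hE, Measure.compProd_apply_prod MeasurableSet.univ hE,
      Measure.restrict_univ]
  have hint : Integrable (fun q : A × SX => ψ q.2) (μ ⊗ₘ κ) := by
    refine Integrable.mono' (integrable_const C)
      (hψm.comp measurable_snd).aestronglyMeasurable ?_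
    exact Filter.Eventually.of_forall fun q => hψb q.2
  calc ∫ q, ψ q.1 ∂μ'
      = ∫ x, ψ x ∂μ'.fst := by
        rw [Measure.fst, integral_map measurable_fst.aemeasurable
          hψm.aestronglyMeasurable]
    _ = ∫ x, ψ x ∂(μ ⊗ₘ κ).snd := by rw [hfst]
    _ = ∫ q, ψ q.2 ∂(μ ⊗ₘ κ) := by
        rw [Measure.snd, integral_map measurable_snd.aemeasurable
          hψm.aestronglyMeasurable]
    _ = ∫ a, ∫ s, ψ s ∂(κ a) ∂μ := Measure.integral_compProd hint

/-- For any play distribution `ν` consistent with the memory-one strategy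
`(σX0[·], σX)` of player `X` and the initial action `σY0` of player `Y` in the
strictly-alternating game in which `Y` moves first, and any bounded measurable
`ψ : S_X → ℝ`, the series `∑ λ^{2t+1} ∫ [ψ(x) − λ² ∫ ψ dσX[x,y]] dν_t`
converges to `λ ∫∫ ψ dσX0[y₀] dσY0(y₀)`. -/
theorem stmt_4
    {SX SY : Type*} [MeasurableSpace SX] [MeasurableSpace SY]
    (lam : ℝ) (hlam0 : 0 < lam) (hlam1 : lam < 1)
    (σX0 : ProbabilityTheory.Kernel SY SX) [ProbabilityTheory.IsMarkovKernel σX0]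
    (σX : ProbabilityTheory.Kernel (SX × SY) SX) [ProbabilityTheory.IsMarkovKernel σX]
    (σY0 : Measure SY) [IsProbabilityMeasure σY0]
    (ν : ℕ → Measure (SX × SY)) (hν : ∀ t, IsProbabilityMeasure (ν t))
    (hν0 : ∀ E : Set SX, MeasurableSet E →
      ν 0 (E ×ˢ (Set.univ : Set SY)) = ∫⁻ y0, σX0 y0 E ∂σY0)
    (hνsucc : ∀ (t : ℕ) (E : Set SX), MeasurableSet E →
      ν (t + 1) (E ×ˢ (Set.univ : Set SY)) = ∫⁻ q, σX q E ∂(ν t))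
    (ψ : SX → ℝ) (hψm : Measurable ψ) (C : ℝ) (hψb : ∀ s, |ψ s| ≤ C) :
    HasSum
      (fun t : ℕ => lam ^ (2 * t + 1) *
        ∫ q, (ψ q.1 - lam ^ 2 * ∫ s, ψ s ∂(σX q)) ∂(ν t))
      (lam * ∫ y0, (∫ s, ψ s ∂(σX0 y0)) ∂σY0) := by
  have hνi := hν
  -- C is nonnegative since SX is nonempty
  have hSX : Nonempty SX := by
    by_contra h
    rw [not_nonempty_iff] at h
    have h1 : (Set.univ : Set (SX × SY)) = ∅ := Set.univ_eq_empty_iff.mpr inferInstance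
    have h2 := (hν 0).measure_univ
    rw [h1] at h2
    simp at h2
  have hC : 0 ≤ C := le_trans (abs_nonneg _) (hψb (Classical.arbitrary SX))
  set I : ℕ → ℝ := fun t => ∫ q, ψ q.1 ∂(ν t) with hI
  have hI0 : I 0 = ∫ y0, ∫ s, ψ s ∂(σX0 y0) ∂σY0 :=
    marg_integral σY0 σX0 (ν 0) hν0 ψ hψm C hψb
  have hIsucc : ∀ t, I (t + 1) = ∫ q, ∫ s, ψ s ∂(σX q) ∂(ν t) := fun t =>
    marg_integral (ν t) σX (ν (t + 1)) (hνsucc t) ψ hψm C hψb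
  have hIbd : ∀ t, |I t| ≤ C := by
    intro t
    have := norm_integral_le_of_norm_le_const (μ := ν t)
      (f := fun q : SX × SY => ψ q.1) (C := C)
      (Filter.Eventually.of_forall fun q => hψb q.1)
    simpa using this
  -- measurability and boundedness of the inner-integral function
  have hgm : StronglyMeasurable fun q : SX × SY => ∫ s, ψ s ∂(σX q) :=
    MeasureTheory.StronglyMeasurable.integral_kernel_prod_right
      (f := fun (q : SX × SY) (s : SX) => ψ s)
      ((hψm.comp measurable_snd).stronglyMeasurable)
  have hgb : ∀ q : SX × SY, |∫ s, ψ s ∂(σX q)| ≤ C := by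
    intro q
    have := norm_integral_le_of_norm_le_const (μ := σX q) (f := ψ) (C := C)
      (Filter.Eventually.of_forall fun s => hψb s)
    simpa using this
  -- the integrand splits
  have hsplit : ∀ t, ∫ q, (ψ q.1 - lam ^ 2 * ∫ s, ψ s ∂(σX q)) ∂(ν t)
      = I t - lam ^ 2 * I (t + 1) := by
    intro t
    have h1 : Integrable (fun q : SX × SY => ψ q.1) (ν t) :=
      Integrable.mono' (integrable_const C)
        (hψm.comp measurable_fst).aestronglyMeasurable
        (Filter.Eventually.of_forall fun q => hψb q.1)
    have h2 : Integrable (fun q : SX × SY => lam ^ 2 * ∫ s, ψ s ∂(σX q)) (ν t) := by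
      refine Integrable.const_mul ?_ _
      exact Integrable.mono' (integrable_const C) hgm.aestronglyMeasurable
        (Filter.Eventually.of_forall fun q => hgb q)
    rw [integral_sub h1 h2, integral_const_mul, hIsucc t]
  set f : ℕ → ℝ := fun t => lam ^ (2 * t + 1) * I t with hf
  have hterm : ∀ t, lam ^ (2 * t + 1) *
      ∫ q, (ψ q.1 - lam ^ 2 * ∫ s, ψ s ∂(σX q)) ∂(ν t) = f t - f (t + 1) := by
    intro t
    rw [hsplit t]
    simp only [hf]
    have : lam ^ (2 * (t + 1) + 1) = lam ^ (2 * t + 1) * lam ^ 2 := by ring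
    rw [this]
    ring
  -- summability
  have hlam0' : 0 ≤ lam := hlam0.le
  have hsummable : Summable (fun t : ℕ => lam ^ (2 * t + 1) *
      ∫ q, (ψ q.1 - lam ^ 2 * ∫ s, ψ s ∂(σX q)) ∂(ν t)) := by
    refine Summable.of_norm_bounded
      (g := fun t : ℕ => (lam * (C + lam ^ 2 * C)) * (lam ^ 2) ^ t) ?_ ?_
    · refine Summable.mul_left _ (summable_geometric_of_lt_one (by positivity) ?_)
      nlinarith
    · intro t
      rw [norm_mul, hsplit t]
      have h1 : ‖lam ^ (2 * t + 1)‖ = lam * (lam ^ 2) ^ t := by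
        rw [Real.norm_eq_abs, abs_of_nonneg (by positivity)]
        ring
      have h2 : ‖I t - lam ^ 2 * I (t + 1)‖ ≤ C + lam ^ 2 * C := by
        refine le_trans (norm_sub_le _ _) ?_
        have := hIbd t
        have := hIbd (t + 1)
        rw [Real.norm_eq_abs, Real.norm_eq_abs, abs_mul,
          abs_of_nonneg (by positivity : (0:ℝ) ≤ lam ^ 2)]
        nlinarith [hIbd t, hIbd (t+1)]
      calc ‖lam ^ (2 * t + 1)‖ * ‖I t - lam ^ 2 * I (t + 1)‖
          ≤ (lam * (lam ^ 2) ^ t) * (C + lam ^ 2 * C) := by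
            rw [h1]; exact mul_le_mul_of_nonneg_left h2 (by positivity)
        _ = (lam * (C + lam ^ 2 * C)) * (lam ^ 2) ^ t := by ring
  -- f tends to 0
  have hf0 : Filter.Tendsto f Filter.atTop (nhds 0) := by
    refine squeeze_zero_norm (a := fun t : ℕ => (lam * C) * (lam ^ 2) ^ t) ?_ ?_
    · intro t
      rw [norm_mul, Real.norm_eq_abs, Real.norm_eq_abs,
        abs_of_nonneg (by positivity : (0:ℝ) ≤ lam ^ (2 * t + 1))]
      have h1 : lam ^ (2 * t + 1) = lam * (lam ^ 2) ^ t := by ring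
      rw [h1, mul_assoc]
      show lam * ((lam ^ 2) ^ t * |I t|) ≤ lam * C * (lam ^ 2) ^ t
      have hp : (0:ℝ) ≤ (lam ^ 2) ^ t := by positivity
      have h3 := mul_le_mul_of_nonneg_left (hIbd t) hp
      nlinarith
    · rw [show (0:ℝ) = (lam * C) * 0 by ring]
      exact (tendsto_pow_atTop_nhds_zero_of_lt_one (by positivity)
        (by nlinarith)).const_mul _
  -- conclude
  rw [hsummable.hasSum_iff_tendsto_nat]
  have hps : ∀ n, (∑ i ∈ Finset.range n, lam ^ (2 * i + 1) *
      ∫ q, (ψ q.1 - lam ^ 2 * ∫ s, ψ s ∂(σX q)) ∂(ν i)) = f 0 - f n := by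
    intro n
    rw [← Finset.sum_range_sub' f n]
    exact Finset.sum_congr rfl fun i _ => hterm i
  simp only [hps]
  have hf0val : f 0 = lam * ∫ y0, ∫ s, ψ s ∂(σX0 y0) ∂σY0 := by
    simp only [hf, hI0]
    norm_num
  rw [show (lam * ∫ y0, ∫ s, ψ s ∂(σX0 y0) ∂σY0) =
    f 0 - 0 by rw [hf0val]; ring]
  exact Filter.Tendsto.const_sub _ hf0
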